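/- Let G and G' be finite simple graphs without isolated vertices, and let ψ : E(G) → E(G') be an edge isomorphism. Then ψ is induced by a graph isomorphism G → G' if and only if ψ does not have a K3,K1,3-pair. -/

import Mathlib

open SimpleGraph

/-- Two edges (elements of `Sym2 V`) share an endpoint. -/
def SharesEndpoint {V : Type*} (e f : Sym2 V) : Prop := ∃ v, v ∈ e ∧ v ∈ f

/-- `ψ` is an edge isomorphism: a bijection of edge sets such that two edges share an
endpoint iff their images share an endpoint. -/
def IsEdgeIsom {V V' : Type*} (G : SimpleGraph V) (G' : SimpleGraph V')
    (ψ : G.edgeSet ≃ G'.edgeSet) : Prop :=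
  ∀ e f : G.edgeSet, SharesEndpoint (e : Sym2 V) (f : Sym2 V) ↔
    SharesEndpoint (ψ e : Sym2 V') (ψ f : Sym2 V')

/-- A set of edges spans a triangle `K₃`. -/
def IsTriangleEdgeSet {V : Type*} (s : Set (Sym2 V)) : Prop :=
  ∃ a b c : V, a ≠ b ∧ a ≠ c ∧ b ≠ c ∧ s = {s(a, b), s(b, c), s(a, c)}

/-- A set of edges spans a 3-star `K_{1,3}` with center `c`. -/
def IsThreeStarEdgeSet {V : Type*} (s : Set (Sym2 V)) : Prop :=
  ∃ c a b d : V, a ≠ b ∧ a ≠ d ∧ b ≠ d ∧ c ≠ a ∧ c ≠ b ∧ c ≠ d ∧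
    s = {s(c, a), s(c, b), s(c, d)}

/-- `ψ` has a `K₃, K_{1,3}`-pair: a set `η` of edges of `G` such that the subgraph spanned
by `η` and the subgraph spanned by `ψ(η)` are a triangle and a 3-star, in either order. -/
def HasK3K13Pair {V V' : Type*} (G : SimpleGraph V) (G' : SimpleGraph V')
    (ψ : G.edgeSet ≃ G'.edgeSet) : Prop :=
  ∃ η : Set G.edgeSet,
    (IsTriangleEdgeSet ((fun e : G.edgeSet => (e : Sym2 V)) '' η) ∧
      IsThreeStarEdgeSet ((fun e : G'.edgeSet => (e : Sym2 V')) '' (ψ '' η))) ∨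
    (IsThreeStarEdgeSet ((fun e : G.edgeSet => (e : Sym2 V)) '' η) ∧
      IsTriangleEdgeSet ((fun e : G'.edgeSet => (e : Sym2 V')) '' (ψ '' η)))

/-- `ψ` is induced by the graph isomorphism `φ`. -/
def InducedByIso {V V' : Type*} (G : SimpleGraph V) (G' : SimpleGraph V')
    (ψ : G.edgeSet ≃ G'.edgeSet) (φ : G ≃g G') : Prop :=
  ∀ e : G.edgeSet, (ψ e : Sym2 V') = Sym2.map (⇑φ) (e : Sym2 V)

namespace WhitneyAux
variable {V V' : Type*}

lemma sym2_eq {a b : V} {e : Sym2 V} (hab : a ≠ b) (ha : a ∈ e) (hb : b ∈ e) :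
    e = s(a, b) :=
  Sym2.eq_of_ne_mem hab ha hb (by simp) (by simp)

lemma sym2_exists (z : Sym2 V) : ∃ x y, z = s(x, y) :=
  Sym2.inductionOn z fun x y => ⟨x, y, rfl⟩

lemma not_tri_star {s : Set (Sym2 V)} (ht : IsTriangleEdgeSet s)
    (hs : IsThreeStarEdgeSet s) : False := by
  obtain ⟨a, b, c, hab, hac, hbc, rfl⟩ := ht
  obtain ⟨c0, x, y, z, -, -, -, -, -, -, heq⟩ := hs
  have hmem : ∀ e ∈ ({s(c0, x), s(c0, y), s(c0, z)} : Set (Sym2 V)), c0 ∈ e := by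
    rintro e (rfl | rfl | rfl) <;> simp
  have h1 : c0 ∈ s(a, b) := hmem _ (heq ▸ (by simp : s(a,b) ∈ ({s(a,b), s(b,c), s(a,c)} : Set (Sym2 V))))
  have h2 : c0 ∈ s(b, c) := hmem _ (heq ▸ (by simp : s(b,c) ∈ ({s(a,b), s(b,c), s(a,c)} : Set (Sym2 V))))
  have h3 : c0 ∈ s(a, c) := hmem _ (heq ▸ (by simp : s(a,c) ∈ ({s(a,b), s(b,c), s(a,c)} : Set (Sym2 V))))
  rw [Sym2.mem_iff] at h1 h2 h3
  rcases h1 with rfl | rfl <;> rcases h2 with h2 | h2 <;> rcases h3 with h3 | h3 <;>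
    simp_all

lemma tri_map {f : V → V'} (hf : Function.Injective f) {s : Set (Sym2 V)}
    (h : IsTriangleEdgeSet s) : IsTriangleEdgeSet (Sym2.map f '' s) := by
  obtain ⟨a, b, c, hab, hac, hbc, rfl⟩ := h
  exact ⟨f a, f b, f c, hf.ne hab, hf.ne hac, hf.ne hbc, by
    simp [Set.image_insert_eq, Sym2.map_pair_eq]⟩

lemma star_map {f : V → V'} (hf : Function.Injective f) {s : Set (Sym2 V)}
    (h : IsThreeStarEdgeSet s) : IsThreeStarEdgeSet (Sym2.map f '' s) := by
  obtain ⟨c0, a, b, d, h1, h2, h3, h4, h5, h6, rfl⟩ := h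
  exact ⟨f c0, f a, f b, f d, hf.ne h1, hf.ne h2, hf.ne h3, hf.ne h4, hf.ne h5, hf.ne h6, by
    simp [Set.image_insert_eq, Sym2.map_pair_eq]⟩


/-- Two distinct edges at a vertex `v`. -/
def DegTwo {V : Type*} (G : SimpleGraph V) (v : V) : Prop :=
  ∃ f g : G.edgeSet, f ≠ g ∧ v ∈ (f : Sym2 V) ∧ v ∈ (g : Sym2 V)

variable {G : SimpleGraph V} {G' : SimpleGraph V'}

lemma decomp {e : G.edgeSet} {a : V} (h : a ∈ (e : Sym2 V)) :
    ∃ b, (e : Sym2 V) = s(a, b) ∧ a ≠ b := by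
  refine ⟨Sym2.Mem.other h, (Sym2.other_spec h).symm, ?_⟩
  intro heq
  have hmem : (e : Sym2 V) ∈ G.edgeSet := e.prop
  rw [← Sym2.other_spec h, ← heq] at hmem
  exact G.loopless.irrefl a (G.mem_edgeSet.mp hmem)

lemma edge_ne {e : G.edgeSet} {a b : V} (h : (e : Sym2 V) = s(a, b)) : a ≠ b := by
  have hmem : (e : Sym2 V) ∈ G.edgeSet := e.prop
  rw [h] at hmem
  exact (G.mem_edgeSet.mp hmem).ne

lemma coe_inj {e f : G.edgeSet} (h : (e : Sym2 V) = (f : Sym2 V)) : e = f := Subtype.ext h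

/-- The images of all edges through a vertex of degree ≥ 2 share a common vertex. -/
lemma star_lemma (ψ : G.edgeSet ≃ G'.edgeSet) (hψ : IsEdgeIsom G G' ψ)
    (hno : ¬ HasK3K13Pair G G' ψ) (v : V) (h2 : DegTwo G v) :
    ∃ w : V', ∀ f : G.edgeSet, v ∈ (f : Sym2 V) → w ∈ (ψ f : Sym2 V') := by
  obtain ⟨f, g, hfg, hvf, hvg⟩ := h2
  obtain ⟨w, hwf, hwg⟩ := (hψ f g).mp ⟨v, hvf, hvg⟩
  refine ⟨w, fun h hvh => ?_⟩
  by_contra hwh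
  have hhf : h ≠ f := fun e => hwh (e ▸ hwf)
  have hhg : h ≠ g := fun e => hwh (e ▸ hwg)
  obtain ⟨x, hxh, hxf⟩ := (hψ h f).mp ⟨v, hvh, hvf⟩
  obtain ⟨y, hyh, hyg⟩ := (hψ h g).mp ⟨v, hvh, hvg⟩
  have hxw : w ≠ x := fun e => hwh (e ▸ hxh)
  have hyw : w ≠ y := fun e => hwh (e ▸ hyh)
  have hpf : (ψ f : Sym2 V') = s(w, x) := sym2_eq hxw hwf hxf
  have hpg : (ψ g : Sym2 V') = s(w, y) := sym2_eq hyw hwg hyg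
  have hxy : x ≠ y := by
    rintro rfl
    exact hfg (ψ.injective (coe_inj (hpf.trans hpg.symm)))
  have hph : (ψ h : Sym2 V') = s(x, y) := sym2_eq hxy hxh hyh
  obtain ⟨fa, hfa, hvfa⟩ := decomp hvf
  obtain ⟨ga, hga, hvga⟩ := decomp hvg
  obtain ⟨ha', hha, hvha⟩ := decomp hvh
  have hfg' : fa ≠ ga := by rintro rfl; exact hfg (coe_inj (hfa.trans hga.symm))
  have hfh' : ha' ≠ fa := by rintro rfl; exact hhf (coe_inj (hha.trans hfa.symm))
  have hgh' : ha' ≠ ga := by rintro rfl; exact hhg (coe_inj (hha.trans hga.symm))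
  apply hno
  refine ⟨{f, g, h}, Or.inr ⟨⟨v, fa, ga, ha', hfg', hfh'.symm, hgh'.symm, hvfa, hvga, hvha, ?_⟩,
    ⟨x, w, y, hxw.symm, hxy, hyw, ?_⟩⟩⟩
  · simp only [Set.image_insert_eq, Set.image_singleton, hfa, hga, hha]
  · have hsw : s(x, w) = s(w, x) := Sym2.eq_swap
    simp only [Set.image_insert_eq, Set.image_singleton, hpf, hpg, hph, hsw]

/-- The centers assigned to both endpoints of an edge are distinct. -/
lemma center_ne (ψ : G.edgeSet ≃ G'.edgeSet) (hψ : IsEdgeIsom G G' ψ)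
    (hno : ¬ HasK3K13Pair G G' ψ) {a b : V} {e : G.edgeSet} (he : (e : Sym2 V) = s(a, b))
    (h2a : DegTwo G a) (h2b : DegTwo G b) {w w' : V'}
    (hwa : ∀ f : G.edgeSet, a ∈ (f : Sym2 V) → w ∈ (ψ f : Sym2 V'))
    (hwb : ∀ f : G.edgeSet, b ∈ (f : Sym2 V) → w' ∈ (ψ f : Sym2 V')) : w ≠ w' := by
  rintro rfl
  have hab : a ≠ b := edge_ne he
  have hae : a ∈ (e : Sym2 V) := by rw [he]; simp
  have hbe : b ∈ (e : Sym2 V) := by rw [he]; simp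
  obtain ⟨f0, hf0a, hf0e⟩ : ∃ f0 : G.edgeSet, a ∈ (f0 : Sym2 V) ∧ f0 ≠ e := by
    obtain ⟨f, g, hfg, haf, hag⟩ := h2a
    rcases eq_or_ne f e with rfl | hne
    · exact ⟨g, hag, fun h => hfg h.symm⟩
    · exact ⟨f, haf, hne⟩
  obtain ⟨g0, hg0b, hg0e⟩ : ∃ g0 : G.edgeSet, b ∈ (g0 : Sym2 V) ∧ g0 ≠ e := by
    obtain ⟨f, g, hfg, hbf, hbg⟩ := h2b
    rcases eq_or_ne f e with rfl | hne
    · exact ⟨g, hbg, fun h => hfg h.symm⟩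
    · exact ⟨f, hbf, hne⟩
  have hf0g0 : f0 ≠ g0 := by
    rintro rfl
    exact hf0e (coe_inj ((sym2_eq hab hf0a hg0b).trans he.symm))
  obtain ⟨x, hf0x, hax⟩ := decomp hf0a
  obtain ⟨y, hg0y, hby⟩ := decomp hg0b
  have hxb : x ≠ b := by rintro rfl; exact hf0e (coe_inj (hf0x.trans he.symm))
  have hya : y ≠ a := by
    rintro rfl
    exact hg0e (coe_inj (hg0y.trans (Sym2.eq_swap.trans he.symm)))
  obtain ⟨z, hz1, hz2⟩ := (hψ f0 g0).mpr ⟨w, hwa f0 hf0a, hwb g0 hg0b⟩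
  rw [hf0x, Sym2.mem_iff] at hz1
  rw [hg0y, Sym2.mem_iff] at hz2
  have hxy : x = y := by
    rcases hz1 with rfl | rfl <;> rcases hz2 with h | h
    · exact absurd h hab
    · exact absurd h.symm hya
    · exact absurd h hxb
    · exact h
  subst hxy
  obtain ⟨r1, hr1, hwr1⟩ := decomp (hwa e hae)
  obtain ⟨r2, hr2, hwr2⟩ := decomp (hwb g0 hg0b)
  obtain ⟨r3, hr3, hwr3⟩ := decomp (hwa f0 hf0a)
  have h12 : r1 ≠ r2 := by
    rintro rfl; exact hg0e (ψ.injective (coe_inj (hr1.trans hr2.symm))).symm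
  have h13 : r1 ≠ r3 := by
    rintro rfl; exact hf0e (ψ.injective (coe_inj (hr1.trans hr3.symm))).symm
  have h23 : r2 ≠ r3 := by
    rintro rfl; exact hf0g0 (ψ.injective (coe_inj (hr3.trans hr2.symm)))
  apply hno
  refine ⟨{e, g0, f0}, Or.inl ⟨⟨a, b, x, hab, hax, hxb.symm, ?_⟩,
    ⟨w, r1, r2, r3, h12, h13, h23, hwr1, hwr2, hwr3, ?_⟩⟩⟩
  · simp only [Set.image_insert_eq, Set.image_singleton, he, hg0y, hf0x]
  · simp only [Set.image_insert_eq, Set.image_singleton, hr1, hr2, hr3]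

open scoped Classical

/-- The vertex map induced by an edge isomorphism. -/
noncomputable def phi (G : SimpleGraph V) (G' : SimpleGraph V') (ψ : G.edgeSet ≃ G'.edgeSet)
    (hedge : ∀ v : V, ∃ f : G.edgeSet, v ∈ (f : Sym2 V))
    (c : ∀ v : V, DegTwo G v → V') (pr : Sym2 V → V × V) (pr' : Sym2 V' → V' × V') :
    V → V' := fun v =>
  if h2 : DegTwo G v then c v h2
  else
    if hu2 : DegTwo G (if v = (pr ((hedge v).choose : Sym2 V)).1
        then (pr ((hedge v).choose : Sym2 V)).2
        else (pr ((hedge v).choose : Sym2 V)).1) then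
      (if c _ hu2 = (pr' (ψ (hedge v).choose : Sym2 V')).1
        then (pr' (ψ (hedge v).choose : Sym2 V')).2
        else (pr' (ψ (hedge v).choose : Sym2 V')).1)
    else
      (if v = (pr ((hedge v).choose : Sym2 V)).1
        then (pr' (ψ (hedge v).choose : Sym2 V')).1
        else (pr' (ψ (hedge v).choose : Sym2 V')).2)

variable {ψ : G.edgeSet ≃ G'.edgeSet}
  {hedge : ∀ v : V, ∃ f : G.edgeSet, v ∈ (f : Sym2 V)}
  {c : ∀ v : V, DegTwo G v → V'} {pr : Sym2 V → V × V} {pr' : Sym2 V' → V' × V'}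

lemma phi_pos {v : V} (h2 : DegTwo G v) :
    phi G G' ψ hedge c pr pr' v = c v h2 := by
  simp only [phi]; rw [dif_pos h2]

lemma phi_neg_pos {v u : V} {e : G.edgeSet} (h2 : ¬ DegTwo G v)
    (hch : (hedge v).choose = e)
    (hu : (if v = (pr (e : Sym2 V)).1 then (pr (e : Sym2 V)).2 else (pr (e : Sym2 V)).1) = u)
    (hu2 : DegTwo G u) :
    phi G G' ψ hedge c pr pr' v =
      (if c u hu2 = (pr' (ψ e : Sym2 V')).1 then (pr' (ψ e : Sym2 V')).2
        else (pr' (ψ e : Sym2 V')).1) := by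
  simp only [phi]; rw [dif_neg h2, hch, hu, dif_pos hu2]

lemma phi_neg_neg {v u : V} {e : G.edgeSet} (h2 : ¬ DegTwo G v)
    (hch : (hedge v).choose = e)
    (hu : (if v = (pr (e : Sym2 V)).1 then (pr (e : Sym2 V)).2 else (pr (e : Sym2 V)).1) = u)
    (hu2 : ¬ DegTwo G u) :
    phi G G' ψ hedge c pr pr' v =
      (if v = (pr (e : Sym2 V)).1 then (pr' (ψ e : Sym2 V')).1
        else (pr' (ψ e : Sym2 V')).2) := by
  simp only [phi]; rw [dif_neg h2, hch, hu, dif_neg hu2]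

lemma phi_spec (hψ : IsEdgeIsom G G' ψ) (hno : ¬ HasK3K13Pair G G' ψ)
    (hc : ∀ (v : V) (h2 : DegTwo G v) (f : G.edgeSet),
      v ∈ (f : Sym2 V) → c v h2 ∈ (ψ f : Sym2 V'))
    (hpr : ∀ z : Sym2 V, s((pr z).1, (pr z).2) = z)
    (hpr' : ∀ z : Sym2 V', s((pr' z).1, (pr' z).2) = z)
    (e : G.edgeSet) :
    (ψ e : Sym2 V') = Sym2.map (phi G G' ψ hedge c pr pr') (e : Sym2 V) := by
  obtain ⟨a, b, hab⟩ := sym2_exists (e : Sym2 V)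
  have hne : a ≠ b := edge_ne hab
  have hae : a ∈ (e : Sym2 V) := by rw [hab]; simp
  have hbe : b ∈ (e : Sym2 V) := by rw [hab]; simp
  rw [hab, Sym2.map_pair_eq]
  have hq := hpr' (ψ e : Sym2 V')
  have hq12 : (pr' (ψ e : Sym2 V')).1 ≠ (pr' (ψ e : Sym2 V')).2 := edge_ne hq.symm
  have hp : ((pr (e : Sym2 V)).1 = a ∧ (pr (e : Sym2 V)).2 = b) ∨
      ((pr (e : Sym2 V)).1 = b ∧ (pr (e : Sym2 V)).2 = a) :=
    Sym2.eq_iff.mp ((hpr (e : Sym2 V)).trans hab)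
  have hchoose : ∀ v : V, v ∈ (e : Sym2 V) → ¬ DegTwo G v → (hedge v).choose = e := by
    intro v hv h2
    by_contra hne2
    exact h2 ⟨_, e, hne2, (hedge v).choose_spec, hv⟩
  have hua : (if b = (pr (e : Sym2 V)).1 then (pr (e : Sym2 V)).2
      else (pr (e : Sym2 V)).1) = a := by
    rcases hp with ⟨h1, h2⟩ | ⟨h1, h2⟩
    · rw [if_neg (fun hh => hne (hh.trans h1).symm)]; exact h1
    · rw [if_pos h1.symm]; exact h2
  have hub : (if a = (pr (e : Sym2 V)).1 then (pr (e : Sym2 V)).2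
      else (pr (e : Sym2 V)).1) = b := by
    rcases hp with ⟨h1, h2⟩ | ⟨h1, h2⟩
    · rw [if_pos h1.symm]; exact h2
    · rw [if_neg (fun hh => hne (hh.trans h1))]; exact h1
  by_cases h2a : DegTwo G a <;> by_cases h2b : DegTwo G b
  · rw [phi_pos h2a, phi_pos h2b]
    exact sym2_eq (center_ne ψ hψ hno hab h2a h2b (fun f hf => hc a h2a f hf)
      (fun f hf => hc b h2b f hf)) (hc a h2a e hae) (hc b h2b e hbe)
  · rw [phi_pos h2a, phi_neg_pos h2b (hchoose b hbe h2b) hua h2a]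
    have hw := hc a h2a e hae
    rw [← hq, Sym2.mem_iff] at hw
    rcases hw with h | h
    · rw [if_pos h, h]; exact hq.symm
    · rcases eq_or_ne (c a h2a) (pr' (ψ e : Sym2 V')).1 with h1 | h1
      · exact absurd (h1.symm.trans h) hq12
      · rw [if_neg h1, h]; exact hq.symm.trans Sym2.eq_swap
  · rw [phi_pos h2b, phi_neg_pos h2a (hchoose a hae h2a) hub h2b]
    have hw := hc b h2b e hbe
    rw [← hq, Sym2.mem_iff] at hw
    rcases hw with h | h
    · rw [if_pos h, h]; exact hq.symm.trans Sym2.eq_swap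
    · rcases eq_or_ne (c b h2b) (pr' (ψ e : Sym2 V')).1 with h1 | h1
      · exact absurd (h1.symm.trans h) hq12
      · rw [if_neg h1, h]; exact hq.symm
  · rw [phi_neg_neg h2a (hchoose a hae h2a) hub h2b,
      phi_neg_neg h2b (hchoose b hbe h2b) hua h2a]
    rcases hp with ⟨h1, h2⟩ | ⟨h1, h2⟩
    · rw [if_pos h1.symm, if_neg (fun hh => hne (hh.trans h1).symm)]; exact hq.symm
    · rw [if_neg (fun hh => hne (hh.trans h1)), if_pos h1.symm]; exact hq.symm.trans Sym2.eq_swap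


end WhitneyAux

open WhitneyAux in
/-- Whitney's theorem (Gardner's version): an edge isomorphism between finite simple graphs
without isolated vertices is induced by a graph isomorphism iff it has no `K₃,K_{1,3}`-pair. -/
theorem whitney_finite {V V' : Type*} [Fintype V] [Fintype V']
    (G : SimpleGraph V) (G' : SimpleGraph V')
    (hG : ∀ v : V, ∃ w, G.Adj v w) (hG' : ∀ v : V', ∃ w, G'.Adj v w)
    (ψ : G.edgeSet ≃ G'.edgeSet) (hψ : IsEdgeIsom G G' ψ) :
    (∃ φ : G ≃g G', InducedByIso G G' ψ φ) ↔ ¬ HasK3K13Pair G G' ψ := by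
  classical
  constructor
  · rintro ⟨φ, hφ⟩ hpair
    obtain ⟨η, hp⟩ := hpair
    have hinj : Function.Injective ⇑φ := φ.injective
    have himg : (fun e : G'.edgeSet => (e : Sym2 V')) '' (ψ '' η)
        = Sym2.map ⇑φ '' ((fun e : G.edgeSet => (e : Sym2 V)) '' η) := by
      rw [Set.image_image, Set.image_image]
      exact Set.image_congr fun e _ => hφ e
    rcases hp with ⟨ht, hs⟩ | ⟨hs, ht⟩
    · refine not_tri_star ?_ hs
      rw [himg]; exact tri_map hinj ht
    · refine not_tri_star ht ?_
      rw [himg]; exact star_map hinj hs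
  · intro hno
    have hedge : ∀ v : V, ∃ f : G.edgeSet, v ∈ (f : Sym2 V) := fun v => by
      obtain ⟨w, hw⟩ := hG v; exact ⟨⟨s(v, w), hw⟩, by simp⟩
    choose c hc using star_lemma ψ hψ hno
    choose p1 p2 hpr using fun z : Sym2 V => sym2_exists z
    choose p1' p2' hpr' using fun z : Sym2 V' => sym2_exists z
    set φ : V → V' := phi G G' ψ hedge c (fun z => (p1 z, p2 z)) (fun z => (p1' z, p2' z))
      with hGdef
    have hφ : ∀ e : G.edgeSet, (ψ e : Sym2 V') = Sym2.map φ (e : Sym2 V) :=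
      phi_spec hψ hno hc (fun z => (hpr z).symm) (fun z => (hpr' z).symm)
    have hinj : Function.Injective φ := by
      intro a b hab
      by_contra hnab
      by_cases hadj : G.Adj a b
      · have h3 : (ψ ⟨s(a, b), hadj⟩ : Sym2 V') = s(φ a, φ b) :=
          (hφ _).trans (Sym2.map_pair_eq φ a b)
        have h4 := (ψ (⟨s(a, b), hadj⟩ : G.edgeSet)).prop
        rw [h3] at h4
        exact (G'.mem_edgeSet.mp h4).ne hab
      · obtain ⟨ea, haea⟩ := hedge a
        obtain ⟨eb, hbeb⟩ := hedge b
        obtain ⟨a2, hea, haa2⟩ := decomp haea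
        obtain ⟨b2, heb, hbb2⟩ := decomp hbeb
        have hψa : (ψ ea : Sym2 V') = s(φ a, φ a2) :=
          (hφ ea).trans (by rw [hea]; exact Sym2.map_pair_eq φ a a2)
        have hψb : (ψ eb : Sym2 V') = s(φ b, φ b2) :=
          (hφ eb).trans (by rw [heb]; exact Sym2.map_pair_eq φ b b2)
        obtain ⟨x, hx1, hx2⟩ := (hψ ea eb).mpr
          ⟨φ a, by rw [hψa]; simp, by rw [hψb, hab]; simp⟩
        rw [hea, Sym2.mem_iff] at hx1
        rw [heb, Sym2.mem_iff] at hx2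
        have hadja : G.Adj a a2 := G.mem_edgeSet.mp (hea ▸ ea.prop)
        have hadjb : G.Adj b b2 := G.mem_edgeSet.mp (heb ▸ eb.prop)
        rcases hx1 with rfl | rfl <;> rcases hx2 with h | h
        · exact hnab h
        · rw [← h] at hadjb; exact hadj hadjb.symm
        · rw [h] at hadja; exact hadj hadja
        · subst h
          have hee : ea = eb := ψ.injective (coe_inj (hψa.trans (by rw [hψb, hab])))
          rw [hee] at hea
          rcases Sym2.eq_iff.mp (hea.symm.trans heb) with ⟨h4, -⟩ | ⟨h4, -⟩
          · exact hnab h4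
          · exact haa2 h4
    have hsurj : Function.Surjective φ := by
      intro w
      obtain ⟨w2, hw⟩ := hG' w
      have hm : w ∈ Sym2.map φ ((ψ.symm ⟨s(w, w2), hw⟩ : G.edgeSet) : Sym2 V) := by
        rw [← hφ (ψ.symm ⟨s(w, w2), hw⟩), Equiv.apply_symm_apply]
        simp
      obtain ⟨x, -, hxw⟩ := Sym2.mem_map.mp hm
      exact ⟨x, hxw⟩
    have hadj_iff : ∀ x y : V, G'.Adj (φ x) (φ y) ↔ G.Adj x y := by
      intro x y
      constructor
      · intro h'
        obtain ⟨u, v, huv⟩ := sym2_exists ((ψ.symm ⟨s(φ x, φ y), h'⟩ : G.edgeSet) : Sym2 V)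
        have h1 : ((⟨s(φ x, φ y), h'⟩ : G'.edgeSet) : Sym2 V') =
            Sym2.map φ ((ψ.symm ⟨s(φ x, φ y), h'⟩ : G.edgeSet) : Sym2 V) := by
          rw [← hφ (ψ.symm ⟨s(φ x, φ y), h'⟩), Equiv.apply_symm_apply]
        rw [huv, Sym2.map_pair_eq] at h1
        have hadjuv : G.Adj u v :=
          G.mem_edgeSet.mp (huv ▸ (ψ.symm (⟨s(φ x, φ y), h'⟩ : G'.edgeSet)).prop)
        rcases Sym2.eq_iff.mp h1 with ⟨h2, h3⟩ | ⟨h2, h3⟩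
        · rw [hinj h2, hinj h3]; exact hadjuv
        · rw [hinj h2, hinj h3]; exact hadjuv.symm
      · intro h
        have h3 : (ψ ⟨s(x, y), h⟩ : Sym2 V') = s(φ x, φ y) :=
          (hφ _).trans (Sym2.map_pair_eq φ x y)
        exact G'.mem_edgeSet.mp (h3 ▸ (ψ (⟨s(x, y), h⟩ : G.edgeSet)).prop)
    refine ⟨⟨Equiv.ofBijective φ ⟨hinj, hsurj⟩, @fun x y => hadj_iff x y⟩, fun e => ?_⟩
    exact hφ e
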